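/- Let g be a finite-dimensional real Lie algebra with an invariant inner product, h a Lie subalgebra, and m the orthogonal complement of h in g. Suppose u ∈ m satisfies pr_m([w,u]) ∈ [h,u] for all w ∈ m. Then dim c_g(u) ≥ dim g − 2 dim h, where c_g(u) = {x ∈ g : [x,u] = 0}. -/

import Mathlib

/- Pointwise version of part (1) of Lemma 5.2: `B` is an invariant inner product on
`g`, `h` a subalgebra, `m` its orthogonal complement, `prh`/`prm` the projections.
If `u ∈ m` satisfies `pr_m ⁅w, u⁆ ∈ ⁅h, u⁆` for all `w ∈ m`, then
`dim c_g(u) ≥ dim g − 2 dim h`, where `c_g(u) = {x : ⁅x,u⁆ = 0}`. -/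
theorem statement_8
    {g : Type*} [LieRing g] [LieAlgebra ℝ g] [FiniteDimensional ℝ g]
    (B : g →ₗ[ℝ] g →ₗ[ℝ] ℝ)
    (hBsymm : ∀ x y : g, B x y = B y x)
    (hBpos : ∀ x : g, x ≠ 0 → 0 < B x x)
    (hBinv : ∀ x y z : g, B ⁅z, x⁆ y + B x ⁅z, y⁆ = 0)
    (h : LieSubalgebra ℝ g)
    (m : Submodule ℝ g)
    (hm : ∀ x : g, x ∈ m ↔ ∀ y ∈ h, B x y = 0)
    (prh prm : g →ₗ[ℝ] g)
    (hprh : ∀ x : g, prh x ∈ h)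
    (hprm : ∀ x : g, prm x ∈ m)
    (hpr : ∀ x : g, prh x + prm x = x)
    (u : g) (hu : u ∈ m)
    (hequi : ∀ w ∈ m, ∃ v ∈ h, ⁅v, u⁆ = prm ⁅w, u⁆)
    (c : Submodule ℝ g)
    (hc : ∀ x : g, x ∈ c ↔ ⁅x, u⁆ = 0) :
    (Module.finrank ℝ g : ℤ) - 2 * (Module.finrank ℝ h : ℤ) ≤
      (Module.finrank ℝ c : ℤ) := by
  -- the linear map x ↦ ⁅x, u⁆
  set f : g →ₗ[ℝ] g :=
    { toFun := fun x => ⁅x, u⁆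
      map_add' := fun x y => add_lie x y u
      map_smul' := fun r x => smul_lie r x u } with hf
  have hfapp : ∀ x : g, f x = ⁅x, u⁆ := fun x => rfl
  have hker : LinearMap.ker f = c := by
    ext x
    simp [LinearMap.mem_ker, hfapp, hc]
  -- range of f is contained in h ⊔ f(h)
  have hrange : LinearMap.range f ≤ h.toSubmodule ⊔ Submodule.map f h.toSubmodule := by
    rintro y ⟨x, rfl⟩
    obtain ⟨v, hv, hveq⟩ := hequi (prm x) (hprm x)
    have hx : f x = prh ⁅prm x, u⁆ + (f (prh x) + f v) := by
      have h1 : x = prh x + prm x := (hpr x).symm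
      have h2 : ⁅prm x, u⁆ = prh ⁅prm x, u⁆ + prm ⁅prm x, u⁆ := (hpr _).symm
      calc f x = ⁅prh x + prm x, u⁆ := by rw [hfapp, ← h1]
        _ = ⁅prh x, u⁆ + ⁅prm x, u⁆ := add_lie _ _ _
        _ = ⁅prh x, u⁆ + (prh ⁅prm x, u⁆ + ⁅v, u⁆) := by rw [hveq, ← h2]
        _ = prh ⁅prm x, u⁆ + (f (prh x) + f v) := by
              rw [hfapp, hfapp]; abel
    rw [hx]
    apply Submodule.add_mem
    · exact Submodule.mem_sup_left (hprh _)
    · exact Submodule.mem_sup_right (Submodule.add_mem _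
        ⟨prh x, hprh x, rfl⟩ ⟨v, hv, rfl⟩)
  -- dimension bounds
  have hrank : Module.finrank ℝ (LinearMap.range f) ≤ 2 * Module.finrank ℝ h := by
    calc Module.finrank ℝ (LinearMap.range f)
        ≤ Module.finrank ℝ (h.toSubmodule ⊔ Submodule.map f h.toSubmodule : Submodule ℝ g) :=
          Submodule.finrank_mono hrange
      _ ≤ Module.finrank ℝ h.toSubmodule +
            Module.finrank ℝ (Submodule.map f h.toSubmodule) :=
          Submodule.finrank_add_le_finrank_add_finrank _ _
      _ ≤ Module.finrank ℝ h.toSubmodule + Module.finrank ℝ h.toSubmodule :=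
          Nat.add_le_add_left (Submodule.finrank_map_le _ _) _
      _ = 2 * Module.finrank ℝ h := by rw [two_mul]; rfl
  have hrn : Module.finrank ℝ (LinearMap.range f) + Module.finrank ℝ c
      = Module.finrank ℝ g := by
    rw [← hker]; exact LinearMap.finrank_range_add_finrank_ker f
  omega
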